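/- Let G be a graph that does not contain K_{ℓ,ℓ} as a subgraph, and let V_1,…,V_d be pairwise disjoint sets of vertices of G, each of size at least ℓ^{d−1}. Then there exist vertices v_1 ∈ V_1, …, v_d ∈ V_d that form an independent set in G (pairwise non-adjacent). -/

import Mathlib

/-- `G` contains `K_{ℓ,ℓ}` as a (not necessarily induced) subgraph. -/
def ContainsKll {V : Type*} (G : SimpleGraph V) (ℓ : ℕ) : Prop :=
  ∃ A B : Finset V, Disjoint A B ∧ A.card = ℓ ∧ B.card = ℓ ∧
    ∀ a ∈ A, ∀ b ∈ B, G.Adj a b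

lemma aux_trans {V : Type*} [Fintype V] [DecidableEq V] (G : SimpleGraph V)
    (ℓ : ℕ) (hℓ : 2 ≤ ℓ) (hK : ¬ ContainsKll G ℓ) :
    ∀ d : ℕ, ∀ Vs : Fin (d+1) → Finset V,
      (∀ i j, i ≠ j → Disjoint (Vs i) (Vs j)) →
      (∀ i, ℓ ^ d ≤ (Vs i).card) →
      ∃ v : Fin (d+1) → V, (∀ i, v i ∈ Vs i) ∧
        ∀ i j, i ≠ j → ¬ G.Adj (v i) (v j) := by
  classical
  intro d
  induction d with
  | zero =>
    intro Vs hdisj hcard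
    have h0 : 0 < (Vs 0).card := lt_of_lt_of_le (by norm_num) (hcard 0)
    obtain ⟨v0, hv0⟩ := Finset.card_pos.mp h0
    refine ⟨fun _ => v0, fun i => ?_, fun i j hij => ?_⟩
    · have : i = 0 := Fin.ext (by have := i.isLt; omega)
      rw [this]; exact hv0
    · exact absurd (Fin.ext (by have := i.isLt; have := j.isLt; omega)) hij
  | succ d ih =>
    intro Vs hdisj hcard
    set L : Fin (d+2) := Fin.last (d+1) with hL
    -- bad vertices for coordinate i
    set B : Fin (d+1) → Finset V := fun i =>
      (Vs L).filter (fun v => ((Vs i.castSucc).filter (fun u => ¬ G.Adj v u)).card < ℓ ^ d)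
      with hBdef
    have hpow1 : 1 ≤ ℓ ^ d := Nat.one_le_pow _ _ (by omega)
    have hpowsucc : ℓ ^ (d+1) = ℓ ^ d * ℓ := pow_succ ℓ d
    -- each B i is small
    have hB : ∀ i, (B i).card < ℓ := by
      intro i
      by_contra hcon
      push_neg at hcon
      obtain ⟨A, hAsub, hAcard⟩ := Finset.exists_subset_card_eq hcon
      set C : Finset V := (Vs i.castSucc).filter (fun u => ∀ a ∈ A, G.Adj a u) with hCdef
      have hCsub : C ⊆ Vs i.castSucc := Finset.filter_subset _ _
      have hsd : (Vs i.castSucc) \ C ⊆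
          A.biUnion (fun a => (Vs i.castSucc).filter (fun u => ¬ G.Adj a u)) := by
        intro u hu
        simp only [Finset.mem_sdiff, hCdef, Finset.mem_filter, not_and, not_forall] at hu
        obtain ⟨hu1, hu2⟩ := hu
        obtain ⟨a, ha, hna⟩ := hu2 hu1
        simp only [Finset.mem_biUnion, Finset.mem_filter]
        exact ⟨a, ha, hu1, hna⟩
      have hsdcard : ((Vs i.castSucc) \ C).card ≤ ℓ * (ℓ ^ d - 1) := by
        calc ((Vs i.castSucc) \ C).card
            ≤ (A.biUnion (fun a => (Vs i.castSucc).filter (fun u => ¬ G.Adj a u))).card :=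
              Finset.card_le_card hsd
          _ ≤ ∑ a ∈ A, ((Vs i.castSucc).filter (fun u => ¬ G.Adj a u)).card :=
              Finset.card_biUnion_le
          _ ≤ ∑ _a ∈ A, (ℓ ^ d - 1) := by
              apply Finset.sum_le_sum
              intro a ha
              have := hAsub ha
              simp only [hBdef, Finset.mem_filter] at this
              omega
          _ = ℓ * (ℓ ^ d - 1) := by rw [Finset.sum_const, smul_eq_mul, hAcard]
      have hmul : ℓ * (ℓ ^ d - 1) + ℓ = ℓ * ℓ ^ d := by
        rw [← Nat.mul_succ]; congr 1; omega
      have hVicard : ℓ ^ d * ℓ ≤ (Vs i.castSucc).card := by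
        rw [← hpowsucc]; exact hcard _
      have hCcard : ℓ ≤ C.card := by
        have h1 := Finset.card_sdiff_add_card_eq_card hCsub
        have : ℓ * ℓ ^ d = ℓ ^ d * ℓ := Nat.mul_comm _ _
        omega
      obtain ⟨Bs, hBssub, hBscard⟩ := Finset.exists_subset_card_eq hCcard
      apply hK
      refine ⟨A, Bs, ?_, hAcard, hBscard, ?_⟩
      · have hALsub : A ⊆ Vs L := hAsub.trans (Finset.filter_subset _ _)
        have hne : L ≠ i.castSucc := (Fin.castSucc_lt_last i).ne'
        exact (hdisj L i.castSucc hne).mono hALsub (hBssub.trans hCsub)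
      · intro a ha b hb
        have := hBssub hb
        simp only [hCdef, Finset.mem_filter] at this
        exact this.2 a ha
    -- find a good vertex in Vs L
    set bad : Finset V := Finset.univ.biUnion B with hbaddef
    have hbadcard : bad.card < (Vs L).card := by
      have h1 : bad.card ≤ ∑ i : Fin (d+1), (B i).card := Finset.card_biUnion_le
      have h2 : ∑ i : Fin (d+1), (B i).card ≤ (d+1) * (ℓ - 1) := by
        calc ∑ i : Fin (d+1), (B i).card ≤ ∑ _i : Fin (d+1), (ℓ - 1) := by
              apply Finset.sum_le_sum; intro i _; have := hB i; omega
          _ = (d+1) * (ℓ - 1) := by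
              rw [Finset.sum_const, smul_eq_mul, Finset.card_univ, Fintype.card_fin]
      have h3 : d + 1 ≤ ℓ ^ d := by
        have : d < 2 ^ d := Nat.lt_two_pow_self
        have h2l : 2 ^ d ≤ ℓ ^ d := Nat.pow_le_pow_left (by omega) d
        omega
      have h4 : (d+1) * (ℓ - 1) < ℓ ^ (d+1) := by
        have h5 : (d+1) * (ℓ - 1) ≤ ℓ ^ d * (ℓ - 1) := Nat.mul_le_mul_right _ h3
        have h6 : ℓ ^ d * (ℓ - 1) + ℓ ^ d = ℓ ^ d * ℓ := by
          rw [← Nat.mul_succ]; congr 1; omega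
        omega
      have := hcard L
      omega
    obtain ⟨v, hvL, hvbad⟩ : ∃ v ∈ Vs L, v ∉ bad := by
      by_contra h
      push_neg at h
      have := Finset.card_le_card (fun x hx => h x hx)
      omega
    have hvgood : ∀ i : Fin (d+1),
        ℓ ^ d ≤ ((Vs i.castSucc).filter (fun u => ¬ G.Adj v u)).card := by
      intro i
      by_contra hcon
      push_neg at hcon
      apply hvbad
      simp only [hbaddef, Finset.mem_biUnion]
      exact ⟨i, Finset.mem_univ i, by simp only [hBdef, Finset.mem_filter]; exact ⟨hvL, hcon⟩⟩
    -- apply the inductive hypothesis to the shrunken sets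
    set Ws : Fin (d+1) → Finset V :=
      fun i => (Vs i.castSucc).filter (fun u => ¬ G.Adj v u) with hWdef
    have hWsub : ∀ i, Ws i ⊆ Vs i.castSucc := fun i => Finset.filter_subset _ _
    obtain ⟨w, hwmem, hwadj⟩ := ih Ws
      (fun i j hij => (hdisj i.castSucc j.castSucc
        (fun h => hij (Fin.castSucc_injective _ h))).mono (hWsub i) (hWsub j))
      hvgood
    refine ⟨Fin.lastCases v w, ?_, ?_⟩
    · intro i
      induction i using Fin.lastCases with
      | last => simp only [Fin.lastCases_last]; exact hvL
      | cast i => simp only [Fin.lastCases_castSucc]; exact hWsub i (hwmem i)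
    · have hvw : ∀ i, ¬ G.Adj v (w i) := by
        intro i
        have := hwmem i
        simp only [hWdef, Finset.mem_filter] at this
        exact this.2
      intro i j hij
      induction i using Fin.lastCases with
      | last =>
        induction j using Fin.lastCases with
        | last => exact absurd rfl hij
        | cast j => simp only [Fin.lastCases_last, Fin.lastCases_castSucc]; exact hvw j
      | cast i =>
        induction j using Fin.lastCases with
        | last =>
          simp only [Fin.lastCases_last, Fin.lastCases_castSucc]
          intro h
          exact hvw i (G.adj_symm h)
        | cast j =>
          simp only [Fin.lastCases_castSucc]
          exact hwadj i j (fun h => hij (by rw [h]))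

theorem stmt2 {V : Type*} [Fintype V] [DecidableEq V] (G : SimpleGraph V)
    (ℓ d : ℕ) (hd : 1 ≤ d) (hℓ : 2 ≤ ℓ)
    (hK : ¬ ContainsKll G ℓ) (Vs : Fin d → Finset V)
    (hdisj : ∀ i j : Fin d, i ≠ j → Disjoint (Vs i) (Vs j))
    (hcard : ∀ i : Fin d, ℓ ^ (d - 1) ≤ (Vs i).card) :
    ∃ v : Fin d → V, (∀ i, v i ∈ Vs i) ∧
      ∀ i j : Fin d, i ≠ j → ¬ G.Adj (v i) (v j) := by
  obtain ⟨e, rfl⟩ : ∃ e, d = e + 1 := ⟨d - 1, by omega⟩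
  exact aux_trans G ℓ hℓ hK e Vs hdisj (by simpa using hcard)
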